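/- Let κ be an infinite cardinal that is not a Ramsey cardinal, in the sense that there exists a coloring c : [κ]^{<ω} → 2 such that there is no H ∈ [κ]^κ with c constant on [H]^n for every n ∈ ω. Then there are sets 𝒮_n ∈ Δ([κ]^n, [κ]^{<κ}) for n < ω such that no single H ∈ [κ]^κ is homogeneous for all of the 𝒮_n. -/

import Mathlib

open Set Cardinal

universe u

/-- `[κ]^κ`: the subsets of `κ` (viewed as the set of ordinals `< κ`) of cardinality `κ`
(equivalently, of order type `κ`). -/
def bigSets (κ : Cardinal.{0}) : Set (Set Ordinal.{0}) :=
  {X | X ⊆ Set.Iio κ.ord ∧ #X = Cardinal.lift.{1} κ}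

/-- `[H]^κ`: the subsets of `H` of cardinality `κ`. -/
def subBig (κ : Cardinal.{0}) (H : Set Ordinal.{0}) : Set (Set Ordinal.{0}) :=
  {X | X ⊆ H ∧ #X = Cardinal.lift.{1} κ}

/-- `X` matches the pattern `(A,B)`: `A ⊆ X` and `B ∩ X = ∅`. -/
def Matches (X A B : Set Ordinal.{0}) : Prop :=
  A ⊆ X ∧ B ∩ X = ∅

/-- `[A;B]`: the members of `[κ]^κ` matching the pattern `(A,B)`. -/
def patternSet (κ : Cardinal.{0}) (A B : Set Ordinal.{0}) : Set (Set Ordinal.{0}) :=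
  {X ∈ bigSets κ | Matches X A B}

/-- `Σ(𝒜,ℬ)`: the subsets of `[κ]^κ` which are unions of sets `[A;B]` with
`A ∈ 𝒜`, `B ∈ ℬ`, `A ∩ B = ∅`. -/
def SigmaFam (κ : Cardinal.{0}) (𝒜 ℬ : Set (Set Ordinal.{0})) : Set (Set (Set Ordinal.{0})) :=
  {S | ∃ Q : Set (Set Ordinal.{0} × Set Ordinal.{0}),
    (∀ p ∈ Q, p.1 ∈ 𝒜 ∧ p.2 ∈ ℬ ∧ Disjoint p.1 p.2) ∧
    S = {X ∈ bigSets κ | ∃ p ∈ Q, Matches X p.1 p.2}}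

/-- `Δ(𝒜,ℬ)`: those `S` with both `S` and `[κ]^κ \ S` in `Σ(𝒜,ℬ)`. -/
def DeltaFam (κ : Cardinal.{0}) (𝒜 ℬ : Set (Set Ordinal.{0})) : Set (Set (Set Ordinal.{0})) :=
  {S | S ∈ SigmaFam κ 𝒜 ℬ ∧ bigSets κ \ S ∈ SigmaFam κ 𝒜 ℬ}

/-- `[κ]^{<γ}`: subsets of `κ` of cardinality `< γ`. -/
def smallSets (κ γ : Cardinal.{0}) : Set (Set Ordinal.{0}) :=
  {A | A ⊆ Set.Iio κ.ord ∧ #A < Cardinal.lift.{1} γ}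

/-- `[κ]^n`: `n`-element subsets of `κ`. -/
def nSets (κ : Cardinal.{0}) (n : ℕ) : Set (Set Ordinal.{0}) :=
  {A | A ⊆ Set.Iio κ.ord ∧ #A = n}

/-- `[κ]^{<ω}`: finite subsets of `κ`. -/
def finSets (κ : Cardinal.{0}) : Set (Set Ordinal.{0}) :=
  {A | A ⊆ Set.Iio κ.ord ∧ A.Finite}

/-- `[κ]^ω`: subsets of `κ` of order type `ω`. -/
def omegaSets (κ : Cardinal.{0}) : Set (Set Ordinal.{0}) :=
  {A | A ⊆ Set.Iio κ.ord ∧ A.Infinite ∧ ∀ a ∈ A, (A ∩ Set.Iio a).Finite}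

/-- `S ⊆ [κ]^κ` is Ramsey: some `H ∈ [κ]^κ` is homogeneous for `S`. -/
def IsRamsey (κ : Cardinal.{0}) (S : Set (Set Ordinal.{0})) : Prop :=
  ∃ H ∈ bigSets κ, subBig κ H ⊆ S ∨ subBig κ H ∩ S = ∅

section Aux

/-- The "gaps" pattern: ordinals below some element of `A` but not in `A`. -/
def tailB (A : Set Ordinal.{0}) : Set Ordinal.{0} :=
  {x | (∃ a ∈ A, x ≤ a) ∧ x ∉ A}

/-- `A` is an initial segment of `X`. -/
def IsInit (X A : Set Ordinal.{0}) : Prop :=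
  A ⊆ X ∧ ∀ x ∈ X, (∃ a ∈ A, x ≤ a) → x ∈ A

lemma matches_tailB {X A : Set Ordinal.{0}} :
    Matches X A (tailB A) ↔ IsInit X A := by
  constructor
  · rintro ⟨h1, h2⟩
    refine ⟨h1, fun x hx hex => ?_⟩
    by_contra hxA
    exact Set.eq_empty_iff_forall_notMem.mp h2 x ⟨⟨hex, hxA⟩, hx⟩
  · rintro ⟨h1, h2⟩
    refine ⟨h1, Set.eq_empty_iff_forall_notMem.mpr ?_⟩
    rintro x ⟨⟨hex, hxA⟩, hx⟩
    exact hxA (h2 x hx hex)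

lemma ncard_of_mk {A : Set Ordinal.{0}} {n : ℕ} (h : #A = n) : A.ncard = n := by
  rw [← Nat.card_coe_set_eq, Nat.card, h, Cardinal.toNat_natCast]

lemma finite_of_mk {A : Set Ordinal.{0}} {n : ℕ} (h : #A = n) : A.Finite :=
  Cardinal.lt_aleph0_iff_set_finite.mp (h ▸ Cardinal.nat_lt_aleph0 n)

lemma init_unique {X A A' : Set Ordinal.{0}} {n : ℕ} (hA : IsInit X A) (hA' : IsInit X A')
    (hc : #A = n) (hc' : #A' = n) : A = A' := by
  have hf' : A'.Finite := finite_of_mk hc'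
  have hf : A.Finite := finite_of_mk hc
  have hsub : A ⊆ A' ∨ A' ⊆ A := by
    by_contra h
    push_neg at h
    obtain ⟨h1, h2⟩ := h
    obtain ⟨a, ha, haA'⟩ := Set.not_subset.mp h1
    obtain ⟨a', ha', haA⟩ := Set.not_subset.mp h2
    rcases le_total a a' with hle | hle
    · exact haA' (hA'.2 a (hA.1 ha) ⟨a', ha', hle⟩)
    · exact haA (hA.2 a' (hA'.1 ha') ⟨a, ha, hle⟩)
  have hcard : A.ncard = A'.ncard := by rw [ncard_of_mk hc, ncard_of_mk hc']
  rcases hsub with h | h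
  · exact Set.eq_of_subset_of_ncard_le h hcard.ge hf'
  · exact (Set.eq_of_subset_of_ncard_le h hcard.le hf).symm

lemma init_exists (X : Set Ordinal.{0}) (hX : X.Infinite) (n : ℕ) :
    ∃ A, IsInit X A ∧ #A = n := by
  induction n with
  | zero =>
    refine ⟨∅, ⟨Set.empty_subset _, ?_⟩, by simp⟩
    rintro x hx ⟨a, ha, -⟩
    exact absurd ha (Set.notMem_empty a)
  | succ n ih =>
    obtain ⟨A, hA, hcard⟩ := ih
    have hfin : A.Finite := finite_of_mk hcard
    have hne : (X \ A).Nonempty := (hX.diff hfin).nonempty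
    set m := Ordinal.lt_wf.min (X \ A) hne with hm_def
    have hm : m ∈ X \ A := Ordinal.lt_wf.min_mem (X \ A) hne
    have hmin : ∀ x ∈ X \ A, ¬ x < m := fun x hx => Ordinal.lt_wf.not_lt_min (X \ A) hx
    refine ⟨insert m A, ⟨Set.insert_subset hm.1 hA.1, ?_⟩, ?_⟩
    · rintro x hx ⟨a, ha, hle⟩
      rcases Set.mem_insert_iff.mp ha with rfl | haA
      · by_cases hxA : x ∈ A
        · exact Set.mem_insert_of_mem _ hxA
        · have : ¬ x < m := hmin x ⟨hx, hxA⟩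
          exact Set.mem_insert_iff.mpr (Or.inl (le_antisymm hle (not_lt.mp this)))
      · exact Set.mem_insert_of_mem _ (hA.2 x hx ⟨a, haA, hle⟩)
    · rw [Cardinal.mk_insert hm.2, hcard]
      norm_cast

lemma X_infinite {κ : Cardinal.{0}} (hκ : ℵ₀ ≤ κ) {X : Set Ordinal.{0}}
    (hX : #X = Cardinal.lift.{1} κ) : X.Infinite := by
  rw [← Set.infinite_coe_iff, Cardinal.infinite_iff, hX]
  exact Cardinal.aleph0_le_lift.mpr hκ

lemma mk_biUnion_lt {κ : Cardinal.{0}} (hκ : ℵ₀ ≤ κ) {A : Set Ordinal.{0}} (hA : A.Finite)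
    (hsub : A ⊆ Set.Iio κ.ord) : #(⋃ a ∈ A, Set.Iic a) < Cardinal.lift.{1} κ := by
  have hκ' : ℵ₀ ≤ Cardinal.lift.{1} κ := Cardinal.aleph0_le_lift.mpr hκ
  refine Set.Finite.induction_on
    (motive := fun t _ => t ⊆ Set.Iio κ.ord → #(⋃ a ∈ t, Set.Iic a) < Cardinal.lift.{1} κ)
    A hA ?_ ?_ hsub
  · intro _
    simpa using lt_of_lt_of_le Cardinal.aleph0_pos hκ'
  · intro a s ha hs ih hsub'
    rw [Set.biUnion_insert]
    refine lt_of_le_of_lt (Cardinal.mk_union_le _ _) (Cardinal.add_lt_of_lt hκ' ?_ ?_)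
    · have haκ : a < κ.ord := hsub' (Set.mem_insert a s)
      have h2 : Set.Iic a = Set.Iio (Order.succ a) := (Order.Iio_succ a).symm
      rw [h2, Ordinal.mk_Iio_ordinal, Cardinal.lift_lt]
      have h1 : (Order.succ a).card = a.card + 1 := by
        rw [← Ordinal.add_one_eq_succ, Ordinal.card_add, Ordinal.card_one]
      rw [h1]
      exact Cardinal.add_lt_of_lt hκ (Cardinal.lt_ord.mp haκ)
        (lt_of_lt_of_le Cardinal.one_lt_aleph0 hκ)
    · exact ih (fun x hx => hsub' (Set.mem_insert_of_mem _ hx))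

lemma mk_diff_big {κ : Cardinal.{0}} (hκ : ℵ₀ ≤ κ) {H B : Set Ordinal.{0}}
    (hH : #H = Cardinal.lift.{1} κ) (hB : #B < Cardinal.lift.{1} κ) :
    #(H \ B : Set Ordinal.{0}) = Cardinal.lift.{1} κ := by
  have hκ' : ℵ₀ ≤ Cardinal.lift.{1} κ := Cardinal.aleph0_le_lift.mpr hκ
  have key : #(H \ (H ∩ B) : Set Ordinal.{0}) + #(H ∩ B : Set Ordinal.{0}) = #H :=
    Cardinal.mk_diff_add_mk Set.inter_subset_left
  rw [Set.diff_self_inter] at key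
  have hHB : #(H ∩ B : Set Ordinal.{0}) < Cardinal.lift.{1} κ :=
    lt_of_le_of_lt (Cardinal.mk_le_mk_of_subset Set.inter_subset_right) hB
  refine le_antisymm (hH ▸ Cardinal.mk_le_mk_of_subset Set.diff_subset) ?_
  by_contra h
  push_neg at h
  have : #(H \ B : Set Ordinal.{0}) + #(H ∩ B : Set Ordinal.{0}) < Cardinal.lift.{1} κ :=
    Cardinal.add_lt_of_lt hκ' h hHB
  rw [key, hH] at this
  exact lt_irrefl _ this

end Aux

section Main

variable (κ : Cardinal.{0}) (c : Set Ordinal.{0} → Fin 2)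

def Qset (n : ℕ) (i : Fin 2) : Set (Set Ordinal.{0} × Set Ordinal.{0}) :=
  {p | p.1 ∈ nSets κ n ∧ c p.1 = i ∧ p.2 = tailB p.1}

def Sset (n : ℕ) (i : Fin 2) : Set (Set Ordinal.{0}) :=
  {X ∈ bigSets κ | ∃ p ∈ Qset κ c n i, Matches X p.1 p.2}

variable {κ c}

lemma mem_Sset_iff (hκ : ℵ₀ ≤ κ) {n : ℕ} {i : Fin 2} {X A₀ : Set Ordinal.{0}}
    (hX : X ∈ bigSets κ) (hA₀ : IsInit X A₀) (hcard : #A₀ = n) :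
    X ∈ Sset κ c n i ↔ c A₀ = i := by
  constructor
  · rintro ⟨-, p, ⟨hp1, hpc, hp2⟩, hm⟩
    rw [hp2] at hm
    have hinit : IsInit X p.1 := matches_tailB.mp hm
    have : p.1 = A₀ := init_unique hinit hA₀ hp1.2 hcard
    rwa [this] at hpc
  · intro h
    refine ⟨hX, ⟨A₀, tailB A₀⟩, ⟨⟨fun x hx => hX.1 (hA₀.1 hx), hcard⟩, h, rfl⟩,
      matches_tailB.mpr hA₀⟩

lemma Sset_mem_Sigma (hκ : ℵ₀ ≤ κ) (n : ℕ) (i : Fin 2) :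
    Sset κ c n i ∈ SigmaFam κ (nSets κ n) (smallSets κ κ) := by
  refine ⟨Qset κ c n i, ?_, rfl⟩
  rintro p ⟨hp1, -, hp2⟩
  refine ⟨hp1, ?_, ?_⟩
  · rw [hp2]
    constructor
    · rintro x ⟨⟨a, ha, hle⟩, -⟩
      exact lt_of_le_of_lt hle (hp1.1 ha)
    · refine lt_of_le_of_lt (Cardinal.mk_le_mk_of_subset ?_)
        (mk_biUnion_lt hκ (finite_of_mk hp1.2) hp1.1)
      rintro x ⟨⟨a, ha, hle⟩, -⟩
      exact Set.mem_biUnion ha hle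
  · rw [hp2, Set.disjoint_right]
    rintro x ⟨-, hx⟩
    exact hx

lemma compl_Sset (hκ : ℵ₀ ≤ κ) (n : ℕ) :
    bigSets κ \ Sset κ c n 0 = Sset κ c n 1 := by
  have fin2 : ∀ j : Fin 2, j ≠ 0 → j = 1 := by decide
  ext X
  constructor
  · rintro ⟨hX, hnot⟩
    obtain ⟨A₀, hA₀, hcard⟩ := init_exists X (X_infinite hκ hX.2) n
    have h0 : c A₀ ≠ 0 := fun h => hnot ((mem_Sset_iff hκ hX hA₀ hcard).mpr h)
    exact (mem_Sset_iff hκ hX hA₀ hcard).mpr (fin2 _ h0)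
  · intro hX1
    have hX : X ∈ bigSets κ := hX1.1
    obtain ⟨A₀, hA₀, hcard⟩ := init_exists X (X_infinite hκ hX.2) n
    have h1 : c A₀ = 1 := (mem_Sset_iff hκ hX hA₀ hcard).mp hX1
    refine ⟨hX, fun h0 => ?_⟩
    have := (mem_Sset_iff hκ hX hA₀ hcard).mp h0
    rw [this] at h1
    exact absurd h1 (by decide)

end Main

lemma exists_ext {κ : Cardinal.{0}} (hκ : ℵ₀ ≤ κ) {H : Set Ordinal.{0}} (hH : H ∈ bigSets κ)
    {A : Set Ordinal.{0}} {n : ℕ} (hA : A ∈ nSets κ n) (hAH : A ⊆ H) :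
    ∃ X, X ∈ subBig κ H ∧ X ∈ bigSets κ ∧ IsInit X A := by
  have hBlt : #(⋃ a ∈ A, Set.Iic a) < Cardinal.lift.{1} κ :=
    mk_biUnion_lt hκ (finite_of_mk hA.2) hA.1
  have hdiff : #(H \ ⋃ a ∈ A, Set.Iic a : Set Ordinal.{0}) = Cardinal.lift.{1} κ :=
    mk_diff_big hκ hH.2 hBlt
  refine ⟨A ∪ {x ∈ H | ∀ a ∈ A, a < x}, ⟨?_, ?_⟩, ⟨?_, ?_⟩, ?_, ?_⟩
  case refine_1 => exact Set.union_subset hAH (Set.sep_subset _ _)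
  case refine_3 =>
    exact fun x hx => hH.1 ((Set.union_subset hAH (Set.sep_subset _ _)) hx)
  case refine_5 => exact Set.subset_union_left
  case refine_6 =>
    rintro x hx ⟨a, ha, hle⟩
    rcases hx with hxA | ⟨-, hgt⟩
    · exact hxA
    · exact absurd (lt_of_lt_of_le (hgt a ha) hle) (lt_irrefl a)
  all_goals
    refine le_antisymm (hH.2 ▸ Cardinal.mk_le_mk_of_subset
      (Set.union_subset hAH (Set.sep_subset _ _))) (hdiff ▸ Cardinal.mk_le_mk_of_subset ?_)
    rintro x ⟨hxH, hxB⟩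
    refine Set.mem_union_right _ ⟨hxH, fun a ha => ?_⟩
    by_contra hlt
    exact hxB (Set.mem_biUnion ha (not_lt.mp hlt))

/-- If the infinite cardinal `κ` is not Ramsey, in the sense
that some coloring `c : [κ]^{<ω} → 2` admits no `H ∈ [κ]^κ` with `c` constant
on `[H]^n` for every `n`, then there are sets `𝒮ₙ ∈ Δ([κ]^n, [κ]^{<κ})`
(`n < ω`) such that no single `H ∈ [κ]^κ` is homogeneous for all of them. -/
theorem statement9 (κ : Cardinal.{0}) (hκ : ℵ₀ ≤ κ)
    (hnr : ∃ c : Set Ordinal.{0} → Fin 2,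
      ¬ ∃ H ∈ bigSets κ, ∀ n : ℕ,
        ∀ A₁ ∈ nSets κ n, ∀ A₂ ∈ nSets κ n, A₁ ⊆ H → A₂ ⊆ H → c A₁ = c A₂) :
    ∃ S : ℕ → Set (Set Ordinal.{0}),
      (∀ n, S n ∈ DeltaFam κ (nSets κ n) (smallSets κ κ)) ∧
      ¬ ∃ H ∈ bigSets κ, ∀ n,
        subBig κ H ⊆ S n ∨ subBig κ H ∩ S n = ∅ := by
  obtain ⟨c, hc⟩ := hnr
  have fin2 : ∀ j : Fin 2, j ≠ 0 → j = 1 := by decide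
  refine ⟨fun n => Sset κ c n 0, fun n => ⟨Sset_mem_Sigma hκ n 0, ?_⟩, ?_⟩
  · rw [compl_Sset hκ n]
    exact Sset_mem_Sigma hκ n 1
  · rintro ⟨H, hH, hhom⟩
    refine hc ⟨H, hH, fun n A₁ hA₁ A₂ hA₂ h1 h2 => ?_⟩
    have key : ∀ A ∈ nSets κ n, A ⊆ H → ∀ i : Fin 2,
        ((∀ X ∈ subBig κ H, X ∈ Sset κ c n 0) → i = 0) →
        ((∀ X ∈ subBig κ H, X ∉ Sset κ c n 0) → i = 1) → True := fun _ _ _ _ _ _ => trivial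
    have val : ∀ A ∈ nSets κ n, A ⊆ H → ∃ i : Fin 2, c A = i ∧
        (subBig κ H ⊆ Sset κ c n 0 → i = 0) ∧
        (subBig κ H ∩ Sset κ c n 0 = ∅ → i = 1) := by
      intro A hA hAH
      obtain ⟨X, hXsub, hXbig, hXinit⟩ := exists_ext hκ hH hA hAH
      refine ⟨c A, rfl, fun hs => ?_, fun he => ?_⟩
      · exact (mem_Sset_iff hκ hXbig hXinit hA.2).mp (hs hXsub)
      · refine fin2 _ fun h0 => ?_
        have : X ∈ Sset κ c n 0 := (mem_Sset_iff hκ hXbig hXinit hA.2).mpr h0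
        exact Set.eq_empty_iff_forall_notMem.mp he X ⟨hXsub, this⟩
    obtain ⟨i₁, hi₁, hs₁, he₁⟩ := val A₁ hA₁ h1
    obtain ⟨i₂, hi₂, hs₂, he₂⟩ := val A₂ hA₂ h2
    rcases hhom n with hs | he
    · rw [hi₁, hi₂, hs₁ hs, hs₂ hs]
    · rw [hi₁, hi₂, he₁ he, he₂ he]
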